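/- Consider a weakly reversible generalized chemical reaction network, let C be a cycle of the network, and let x* ∈ ℝ^n_+. Then there exists a family of edge labels k^ε ∈ ℝ^E_+ indexed by ε > 0 such that x* ∈ Z_{k^ε} for every ε > 0 and A_{k^ε} diag((x*)^Ỹ) → A^C_{k=1} as ε → 0⁺; consequently, the Jacobian matrices J^ε = Y A_{k^ε} diag((x*)^Ỹ) Ỹᵀ diag((x*)^{−1}) converge to Y A^C_{k=1} Ỹᵀ diag((x*)^{−1}) as ε → 0⁺. -/
import Mathlib


open Matrix Polynomial Filter Topology

noncomputable section

/-- `D ∈ 𝒟₊`: a diagonal matrix with positive diagonal entries. -/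
def IsPosDiag {n : ℕ} (D : Matrix (Fin n) (Fin n) ℝ) : Prop :=
  ∃ d : Fin n → ℝ, (∀ i, 0 < d i) ∧ D = Matrix.diagonal d

/-- A real square matrix is stable if every root in `ℂ` of its characteristic
polynomial has negative real part. -/
def IsStableMat {n : ℕ} (A : Matrix (Fin n) (Fin n) ℝ) : Prop :=
  ∀ z : ℂ, (A.charpoly.map (algebraMap ℝ ℂ)).IsRoot z → z.re < 0

/-- A real square matrix is semistable if every root in `ℂ` of its characteristic
polynomial has non-positive real part. -/
def IsSemistableMat {n : ℕ} (A : Matrix (Fin n) (Fin n) ℝ) : Prop :=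
  ∀ z : ℂ, (A.charpoly.map (algebraMap ℝ ℂ)).IsRoot z → z.re ≤ 0

/-- The restriction `A|_S : S → S` of a matrix whose range is contained in `S`. -/
def restrictedMap {n : ℕ} (A : Matrix (Fin n) (Fin n) ℝ) (S : Submodule ℝ (Fin n → ℝ))
    (h : ∀ v, A.mulVec v ∈ S) : S →ₗ[ℝ] S :=
  A.mulVecLin.restrict (p := S) (q := S) (fun x _ => by simpa using h x)

/-- `A` is stable on `S`: `range A ⊆ S` and every eigenvalue over `ℂ` (root of the
characteristic polynomial) of `A|_S : S → S` has negative real part. -/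
def IsStableOn {n : ℕ} (A : Matrix (Fin n) (Fin n) ℝ) (S : Submodule ℝ (Fin n → ℝ)) : Prop :=
  ∃ h : ∀ v, A.mulVec v ∈ S,
    ∀ z : ℂ, (((restrictedMap A S h).charpoly).map (algebraMap ℝ ℂ)).IsRoot z → z.re < 0

/-- `A` is semistable on `S`: `range A ⊆ S` and every eigenvalue over `ℂ` of
`A|_S : S → S` has non-positive real part. -/
def IsSemistableOn {n : ℕ} (A : Matrix (Fin n) (Fin n) ℝ) (S : Submodule ℝ (Fin n → ℝ)) : Prop :=
  ∃ h : ∀ v, A.mulVec v ∈ S,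
    ∀ z : ℂ, (((restrictedMap A S h).charpoly).map (algebraMap ℝ ℂ)).IsRoot z → z.re ≤ 0

/-- `M < 0` on `S`. -/
def NegDefOn {n : ℕ} (M : Matrix (Fin n) (Fin n) ℝ) (S : Submodule ℝ (Fin n → ℝ)) : Prop :=
  ∀ x ∈ S, x ≠ 0 → x ⬝ᵥ M.mulVec x < 0

/-- `M ≤ 0` on `S`. -/
def NegSemidefOn {n : ℕ} (M : Matrix (Fin n) (Fin n) ℝ) (S : Submodule ℝ (Fin n → ℝ)) : Prop :=
  ∀ x ∈ S, x ⬝ᵥ M.mulVec x ≤ 0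

/-- `M > 0` on `S`. -/
def PosDefOn {n : ℕ} (M : Matrix (Fin n) (Fin n) ℝ) (S : Submodule ℝ (Fin n → ℝ)) : Prop :=
  ∀ x ∈ S, x ≠ 0 → 0 < x ⬝ᵥ M.mulVec x

/-- The Laplacian matrix `A_k` of the labeled digraph `(V,E)` with edge labels `k`:
`(A_k)_{i',i} = k_{i→i'}` if `(i→i') ∈ E`, `(A_k)_{i,i} = -∑_{(i→i')∈E} k_{i→i'}`,
and `0` otherwise (the graph has no self-loops). -/
def laplacian {m : ℕ} (E : Finset (Fin m × Fin m)) (k : Fin m × Fin m → ℝ) :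
    Matrix (Fin m) (Fin m) ℝ :=
  fun i' i => (if (i, i') ∈ E then k (i, i') else 0)
    - (if i' = i then ∑ e ∈ E.filter (fun e => e.1 = i), k e else 0)

/-- The incidence matrix `I_E ∈ ℝ^{V×E}`, with column `e_{i'} - e_i` for each edge `(i→i')`. -/
def incidence {m : ℕ} (E : Finset (Fin m × Fin m)) :
    Matrix (Fin m) {e : Fin m × Fin m // e ∈ E} ℝ :=
  fun i e => (if (e : Fin m × Fin m).2 = i then (1 : ℝ) else 0)
    - (if (e : Fin m × Fin m).1 = i then 1 else 0)

/-- `x^Ỹ ∈ ℝ^V`, defined by `(x^Ỹ)_j = ∏_i x_i ^ (Ỹ)_{ij}` (real exponents). -/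
def powVec {n m : ℕ} (x : Fin n → ℝ) (Yt : Matrix (Fin n) (Fin m) ℝ) : Fin m → ℝ :=
  fun j => ∏ i, (x i) ^ (Yt i j)

/-- The digraph `(V,E)` is weakly reversible: every connected component is strongly
connected, i.e. whenever `a` and `b` are connected by an undirected path, there is a
directed path from `a` to `b`. -/
def WeaklyReversible {m : ℕ} (E : Finset (Fin m × Fin m)) : Prop :=
  ∀ a b : Fin m,
    Relation.ReflTransGen (fun u v => (u, v) ∈ E ∨ (v, u) ∈ E) a b →
    Relation.ReflTransGen (fun u v => (u, v) ∈ E) a b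

/-- The stoichiometric subspace `S = range (Y I_E)`. -/
def stoichSubspace {n m : ℕ} (Y : Matrix (Fin n) (Fin m) ℝ) (E : Finset (Fin m × Fin m)) :
    Submodule ℝ (Fin n → ℝ) :=
  LinearMap.range (Y * incidence E).mulVecLin

/-- The Jacobian matrix `J(x) = Y A_k diag(x^Ỹ) Ỹᵀ diag(x⁻¹)` of `x ↦ Y A_k x^Ỹ`. -/
def jacobianMat {n m : ℕ} (E : Finset (Fin m × Fin m)) (k : Fin m × Fin m → ℝ)
    (Y Yt : Matrix (Fin n) (Fin m) ℝ) (x : Fin n → ℝ) : Matrix (Fin n) (Fin n) ℝ :=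
  Y * laplacian E k * Matrix.diagonal (powVec x Yt) * Ytᵀ * Matrix.diagonal (fun i => (x i)⁻¹)

/-- `C` is (the edge set of) a cycle: `{i_1→i_2, …, i_{r-1}→i_r, i_r→i_1}` with
pairwise distinct vertices `i_1, …, i_r` (and `r ≥ 2`). -/
def IsCycleEdges {m : ℕ} (C : Finset (Fin m × Fin m)) : Prop :=
  ∃ (r : ℕ) (f : Fin (r + 2) → Fin m), Function.Injective f ∧
    C = Finset.image (fun j => (f j, f (j + 1))) Finset.univ

/-- The edge set of the directed `m`-cycle `1 → 2 → ⋯ → m → 1`. -/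
def cycleEdges (m : ℕ) [NeZero m] : Finset (Fin m × Fin m) :=
  Finset.image (fun i : Fin m => (i, i + 1)) Finset.univ

end
section MyAuxStmt14
open Finset

variable {m : ℕ}

/-- Divergence of an edge-weight function at a vertex. -/
def myDiv (E : Finset (Fin m × Fin m)) (w : Fin m × Fin m → ℝ) (i : Fin m) : ℝ :=
  (∑ e ∈ E.filter (fun e => e.2 = i), w e) - (∑ e ∈ E.filter (fun e => e.1 = i), w e)

lemma myDiv_add_smul (E : Finset (Fin m × Fin m)) (a b : Fin m × Fin m → ℝ) (ε : ℝ) (i : Fin m) :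
    myDiv E (fun f => a f + ε * b f) i = myDiv E a i + ε * myDiv E b i := by
  simp only [myDiv, Finset.sum_add_distrib, Finset.mul_sum]
  ring_nf
  rw [Finset.mul_sum, Finset.mul_sum]
  ring

lemma myDiv_single (E : Finset (Fin m × Fin m)) {g : Fin m × Fin m} (hg : g ∈ E) (i : Fin m) :
    myDiv E (fun f => if f = g then (1:ℝ) else 0) i
      = (if i = g.2 then 1 else 0) - (if i = g.1 then 1 else 0) := by
  unfold myDiv
  rw [Finset.sum_ite_eq' (E.filter (fun e => e.2 = i)) g (fun _ => (1:ℝ)),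
      Finset.sum_ite_eq' (E.filter (fun e => e.1 = i)) g (fun _ => (1:ℝ))]
  simp [Finset.mem_filter, hg, eq_comm]

lemma flow_exists (E : Finset (Fin m × Fin m)) {a b : Fin m}
    (h : Relation.ReflTransGen (fun u v => (u, v) ∈ E) a b) :
    ∃ w : Fin m × Fin m → ℝ, (∀ f, 0 ≤ w f) ∧
      ∀ i, myDiv E w i = (if i = b then 1 else 0) - (if i = a then 1 else 0) := by
  induction h with
  | refl => exact ⟨0, fun f => le_refl 0, fun i => by simp [myDiv]⟩
  | @tail b c h hbc ih =>
    obtain ⟨w, hw0, hdiv⟩ := ih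
    refine ⟨fun f => w f + (if f = (b, c) then 1 else 0), ?_, ?_⟩
    · intro f; have := hw0 f; positivity
    · intro i
      have h1 : myDiv E (fun f => w f + 1 * (if f = (b, c) then (1:ℝ) else 0)) i
          = myDiv E w i + 1 * myDiv E (fun f => if f = (b, c) then (1:ℝ) else 0) i :=
        myDiv_add_smul E w _ 1 i
      simp only [one_mul] at h1
      rw [h1, hdiv i, myDiv_single E hbc i]
      by_cases hib : i = b <;> by_cases hic : i = c <;> by_cases hia : i = a <;>
        simp [hib, hic, hia] <;> ring

lemma circulation_exists (E : Finset (Fin m × Fin m)) (hwr : WeaklyReversible E) :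
    ∃ w : Fin m × Fin m → ℝ, (∀ f, 0 ≤ w f) ∧ (∀ e ∈ E, 1 ≤ w e) ∧ ∀ i, myDiv E w i = 0 := by
  have key : ∀ e : Fin m × Fin m, ∃ w : Fin m × Fin m → ℝ,
      (∀ f, 0 ≤ w f) ∧ (e ∈ E → 1 ≤ w e) ∧ ∀ i, myDiv E w i = 0 := by
    intro e
    by_cases he : e ∈ E
    · have hpath : Relation.ReflTransGen (fun u v => (u, v) ∈ E) e.2 e.1 := by
        apply hwr
        exact Relation.ReflTransGen.single (Or.inr (by simpa using he))
      obtain ⟨w, hw0, hdiv⟩ := flow_exists E hpath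
      refine ⟨fun f => w f + (if f = e then 1 else 0), ?_, ?_, ?_⟩
      · intro f; have := hw0 f; positivity
      · intro _; have := hw0 e; simp; linarith
      · intro i
        have h1 : myDiv E (fun f => w f + 1 * (if f = e then (1:ℝ) else 0)) i
            = myDiv E w i + 1 * myDiv E (fun f => if f = e then (1:ℝ) else 0) i :=
          myDiv_add_smul E w _ 1 i
        simp only [one_mul] at h1
        rw [h1, hdiv i, myDiv_single E he i]
        ring
    · exact ⟨0, fun f => le_refl 0, fun h => absurd h he, fun i => by simp [myDiv]⟩
  choose W hW0 hW1 hW2 using key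
  refine ⟨fun f => ∑ e ∈ E, W e f, fun f => Finset.sum_nonneg fun e _ => hW0 e f, ?_, ?_⟩
  · intro e he
    calc (1:ℝ) ≤ W e e := hW1 e he
    _ ≤ ∑ e' ∈ E, W e' e :=
        Finset.single_le_sum (fun e' _ => hW0 e' e) he
  · intro i
    unfold myDiv
    rw [Finset.sum_comm, Finset.sum_comm (s := E.filter (fun e => e.1 = i))]
    rw [← Finset.sum_sub_distrib]
    exact Finset.sum_eq_zero fun e _ => hW2 e i

lemma sum_snd_eq (E : Finset (Fin m × Fin m)) (g : Fin m × Fin m → ℝ) (i' : Fin m) :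
    (∑ i : Fin m, if (i, i') ∈ E then g (i, i') else 0)
      = ∑ e ∈ E.filter (fun e => e.2 = i'), g e := by
  rw [← Finset.sum_filter]
  refine Finset.sum_nbij' (fun i => (i, i')) (fun e => e.1) ?_ ?_ ?_ ?_ ?_
  · intro i hi
    simp only [Finset.mem_filter, Finset.mem_univ, true_and] at hi
    simp [hi]
  · intro e he
    simp only [Finset.mem_filter, Finset.mem_univ, true_and] at he ⊢
    rw [← he.2]; exact he.1
  · intro i hi; rfl
  · intro e he
    simp only [Finset.mem_filter] at he
    exact Prod.ext rfl he.2.symm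
  · intro i hi; rfl

lemma lap_row_sum (E : Finset (Fin m × Fin m)) (w : Fin m × Fin m → ℝ) (i' : Fin m) :
    (∑ i : Fin m, laplacian E w i' i) = myDiv E w i' := by
  unfold laplacian myDiv
  rw [Finset.sum_sub_distrib]
  congr 1
  · exact sum_snd_eq E w i'
  · rw [Finset.sum_ite_eq]
    simp

lemma lap_add_smul (E : Finset (Fin m × Fin m)) (a b : Fin m × Fin m → ℝ) (ε : ℝ) :
    laplacian E (fun f => a f + ε * b f) = laplacian E a + ε • laplacian E b := by
  ext i' i
  simp only [laplacian, Matrix.add_apply, Matrix.smul_apply, smul_eq_mul,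
    Finset.sum_add_distrib, Finset.mul_sum]
  split_ifs <;> first
    | (rw [← Finset.mul_sum]; ring)
    | ring

lemma lap_mul_diag (E : Finset (Fin m × Fin m)) (w : Fin m × Fin m → ℝ) (c : Fin m → ℝ)
    (hc : ∀ j, c j ≠ 0) :
    laplacian E (fun f => w f * (c f.1)⁻¹) * Matrix.diagonal c = laplacian E w := by
  ext i' i
  rw [Matrix.mul_diagonal]
  simp only [laplacian]
  rw [sub_mul]
  congr 1
  · split_ifs with h
    · exact inv_mul_cancel_right₀ (hc i) _
    · ring
  · split_ifs with h
    · subst h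
      rw [Finset.sum_mul]
      refine Finset.sum_congr rfl fun e he => ?_
      have h1 : e.1 = i' := (Finset.mem_filter.mp he).2
      rw [h1]
      exact inv_mul_cancel_right₀ (hc i') _
    · ring

lemma lap_indicator (E C : Finset (Fin m × Fin m)) (hCE : C ⊆ E) :
    laplacian E (fun f => if f ∈ C then (1:ℝ) else 0) = laplacian C (fun _ => 1) := by
  ext i' i
  simp only [laplacian]
  congr 1
  · by_cases h : (i, i') ∈ C
    · simp [h, hCE h]
    · by_cases h2 : (i, i') ∈ E <;> simp [h, h2]
  · by_cases h : i' = i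
    · simp only [h, if_true]
      rw [show (∑ e ∈ E.filter (fun e => e.1 = i), if e ∈ C then (1:ℝ) else 0)
          = ∑ e ∈ (E.filter (fun e => e.1 = i)).filter (fun e => e ∈ C), (1:ℝ) from
          (Finset.sum_filter _ _).symm]
      congr 1
      ext e
      simp only [Finset.mem_filter]
      exact ⟨fun ⟨⟨_, h1⟩, h2⟩ => ⟨h2, h1⟩, fun ⟨h2, h1⟩ => ⟨⟨hCE h2, h1⟩, h2⟩⟩
    · simp [h]

lemma sum_filter_indicator (E C : Finset (Fin m × Fin m)) (hCE : C ⊆ E)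
    (p : Fin m × Fin m → Prop) [DecidablePred p] :
    (∑ e ∈ E.filter p, if e ∈ C then (1:ℝ) else 0) = ∑ e ∈ C, if p e then (1:ℝ) else 0 := by
  rw [Finset.sum_filter]
  have h1 : (∑ e ∈ E, if p e then (if e ∈ C then (1:ℝ) else 0) else 0)
      = ∑ e ∈ E, if e ∈ C then (if p e then (1:ℝ) else 0) else 0 :=
    Finset.sum_congr rfl fun e _ => by split_ifs <;> rfl
  rw [h1, ← Finset.sum_filter]
  rw [show E.filter (fun e => e ∈ C) = C from by
    ext e; simp only [Finset.mem_filter]; exact ⟨fun h => h.2, fun h => ⟨hCE h, h⟩⟩]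

lemma cycle_div (E C : Finset (Fin m × Fin m)) (hC : IsCycleEdges C) (hCE : C ⊆ E) (i : Fin m) :
    myDiv E (fun f => if f ∈ C then (1:ℝ) else 0) i = 0 := by
  obtain ⟨r, f, hf, hCeq⟩ := hC
  unfold myDiv
  rw [sum_filter_indicator E C hCE, sum_filter_indicator E C hCE, hCeq]
  have hg : ∀ a ∈ (Finset.univ : Finset (Fin (r+2))), ∀ b ∈ Finset.univ,
      (fun j => (f j, f (j + 1))) a = (fun j => (f j, f (j + 1))) b → a = b := by
    intro a _ b _ hab
    exact hf (congrArg Prod.fst hab)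
  rw [Finset.sum_image hg, Finset.sum_image hg]
  simp only
  rw [sub_eq_zero]
  exact Fintype.sum_equiv (Equiv.addRight (1 : Fin (r+2))) _ _ (fun j => rfl)

end MyAuxStmt14

/-- approximating a cycle: there is a family `k^ε` of rate constants with
`x* ∈ Z_{k^ε}` for all `ε > 0`, `A_{k^ε} diag((x*)^Ỹ) → A^C_{k=1}`, and
`J^ε → Y A^C_{k=1} Ỹᵀ diag((x*)⁻¹)` as `ε → 0⁺`. -/
theorem stmt14 {n m : ℕ} (E : Finset (Fin m × Fin m)) (hE : ∀ e ∈ E, e.1 ≠ e.2)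
    (hwr : WeaklyReversible E) (Y Yt : Matrix (Fin n) (Fin m) ℝ)
    (C : Finset (Fin m × Fin m)) (hC : IsCycleEdges C) (hCE : C ⊆ E)
    (x : Fin n → ℝ) (hx : ∀ i, 0 < x i) :
    ∃ K : ℝ → (Fin m × Fin m → ℝ),
      (∀ ε > (0 : ℝ), ∀ e ∈ E, 0 < K ε e) ∧
      (∀ ε > (0 : ℝ), (laplacian E (K ε)).mulVec (powVec x Yt) = 0) ∧
      Filter.Tendsto (fun ε => laplacian E (K ε) * Matrix.diagonal (powVec x Yt))
        (nhdsWithin 0 (Set.Ioi 0)) (nhds (laplacian C (fun _ => 1))) ∧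
      Filter.Tendsto (fun ε => jacobianMat E (K ε) Y Yt x)
        (nhdsWithin 0 (Set.Ioi 0))
        (nhds (Y * laplacian C (fun _ => 1) * Ytᵀ *
          Matrix.diagonal (fun i => (x i)⁻¹))) := by
  classical
  obtain ⟨w₀, hw0, hw1, hwdiv⟩ := circulation_exists E hwr
  have hc : ∀ j, (0:ℝ) < powVec x Yt j := fun j =>
    Finset.prod_pos fun i _ => Real.rpow_pos_of_pos (hx i) _
  set c : Fin m → ℝ := powVec x Yt with hcdef
  set K : ℝ → (Fin m × Fin m → ℝ) :=
    fun ε f => ((if f ∈ C then (1:ℝ) else 0) + ε * w₀ f) * (c f.1)⁻¹ with hK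
  have hprod : ∀ ε : ℝ, laplacian E (K ε) * Matrix.diagonal c
      = laplacian C (fun _ => (1:ℝ)) + ε • laplacian E w₀ := by
    intro ε
    simp only [hK]
    rw [lap_mul_diag E (fun f => (if f ∈ C then (1:ℝ) else 0) + ε * w₀ f) c
        (fun j => (hc j).ne'),
      lap_add_smul, lap_indicator E C hCE]
  refine ⟨K, ?_, ?_, ?_, ?_⟩
  · intro ε hε e he
    simp only [hK]
    have h1 : (0:ℝ) < (if e ∈ C then (1:ℝ) else 0) + ε * w₀ e :=
      add_pos_of_nonneg_of_pos (by positivity)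
        (mul_pos hε (lt_of_lt_of_le one_pos (hw1 e he)))
    exact mul_pos h1 (inv_pos.mpr (hc e.1))
  · intro ε hε
    funext i'
    have h2 : (laplacian E (K ε)).mulVec c i'
        = ∑ i, (laplacian E (K ε) * Matrix.diagonal c) i' i := by
      simp [Matrix.mulVec, dotProduct, Matrix.mul_diagonal]
    have hLD : laplacian E (K ε) * Matrix.diagonal c
        = laplacian E (fun f => (if f ∈ C then (1:ℝ) else 0) + ε * w₀ f) := by
      simp only [hK]
      exact lap_mul_diag E _ c (fun j => (hc j).ne')
    rw [Pi.zero_apply, h2, hLD, lap_row_sum, myDiv_add_smul,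
      cycle_div E C hC hCE, hwdiv]
    ring
  · have heq : (fun ε : ℝ => laplacian E (K ε) * Matrix.diagonal c)
        = fun ε => laplacian C (fun _ => (1:ℝ)) + ε • laplacian E w₀ := funext hprod
    rw [heq]
    have hcont : Continuous fun ε : ℝ =>
        laplacian C (fun _ => (1:ℝ)) + ε • laplacian E w₀ :=
      continuous_const.add (continuous_id.smul continuous_const)
    have h0 := hcont.tendsto 0
    simp only [zero_smul, add_zero] at h0
    exact h0.mono_left nhdsWithin_le_nhds
  · have heq : (fun ε : ℝ => jacobianMat E (K ε) Y Yt x)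
        = fun ε => Y * laplacian C (fun _ => (1:ℝ)) * Ytᵀ *
              Matrix.diagonal (fun i => (x i)⁻¹)
            + ε • (Y * laplacian E w₀ * Ytᵀ * Matrix.diagonal (fun i => (x i)⁻¹)) := by
      funext ε
      simp only [jacobianMat]
      rw [Matrix.mul_assoc Y (laplacian E (K ε)) (Matrix.diagonal c), hprod ε]
      simp only [Matrix.mul_add, Matrix.add_mul, Matrix.mul_smul, Matrix.smul_mul,
        Matrix.mul_assoc]
    rw [heq]
    have hcont : Continuous fun ε : ℝ =>
        Y * laplacian C (fun _ => (1:ℝ)) * Ytᵀ * Matrix.diagonal (fun i => (x i)⁻¹)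
          + ε • (Y * laplacian E w₀ * Ytᵀ * Matrix.diagonal (fun i => (x i)⁻¹)) :=
      continuous_const.add (continuous_id.smul continuous_const)
    have h0 := hcont.tendsto 0
    simp only [zero_smul, add_zero] at h0
    exact h0.mono_left nhdsWithin_le_nhds
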